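/- (Strict version) Let q, α ∈ (0,1), let n0 be an integer, and let y : ℤ → ℝ encode a function on T_q. Suppose y(n0) > 0 and y is strictly increasing, i.e. y(n−1) > y(n) for every integer n ≤ n0. Then S_y(n) − S_y(n+1) > 0 for every integer n < n0 (i.e. the Riemann q-fractional derivative (_q∇_{qa}^{α} y)(q^n) of order α based at qa, a = q^{n0}, is strictly positive at every point t = q^n with n < n0). -/

import Mathlib

open Real

/-- The infinite product part of the q-factorial power, with real shift `d`. -/
noncomputable def Pfun (q α : ℝ) (d : ℝ) : ℝ :=
  ∏' j : ℕ, (1 - q ^ (d + (j : ℝ))) / (1 - q ^ (d + (j : ℝ) - α))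

lemma den_pos {q α : ℝ} (hq0 : 0 < q) (hq1 : q < 1) (hα1 : α < 1)
    {x : ℝ} (hx : 1 ≤ x) : 0 < 1 - q ^ (x - α) := by
  have : q ^ (x - α) < 1 := Real.rpow_lt_one hq0.le hq1 (by linarith)
  linarith

lemma factor_gt_one {q α : ℝ} (hq0 : 0 < q) (hq1 : q < 1) (hα0 : 0 < α) (hα1 : α < 1)
    {x : ℝ} (hx : 1 ≤ x) : 1 < (1 - q ^ x) / (1 - q ^ (x - α)) := by
  rw [lt_div_iff₀ (den_pos hq0 hq1 hα1 hx)]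
  have : q ^ x < q ^ (x - α) :=
    Real.rpow_lt_rpow_of_exponent_gt hq0 hq1 (by linarith)
  linarith

lemma factor_pos {q α : ℝ} (hq0 : 0 < q) (hq1 : q < 1) (hα0 : 0 < α) (hα1 : α < 1)
    {x : ℝ} (hx : 1 ≤ x) : 0 < (1 - q ^ x) / (1 - q ^ (x - α)) :=
  lt_trans one_pos (factor_gt_one hq0 hq1 hα0 hα1 hx)

lemma summable_logf {q α : ℝ} (hq0 : 0 < q) (hq1 : q < 1) (hα0 : 0 < α) (hα1 : α < 1)
    {d : ℝ} (hd : 1 ≤ d) :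
    Summable (fun j : ℕ =>
      Real.log ((1 - q ^ (d + (j : ℝ))) / (1 - q ^ (d + (j : ℝ) - α)))) := by
  have hsg : Summable (fun j : ℕ => (q ^ (d - α) / (1 - q ^ ((1:ℝ) - α))) * q ^ j) :=
    (summable_geometric_of_lt_one hq0.le hq1).mul_left _
  apply Summable.of_nonneg_of_le _ _ hsg
  · intro j
    have hx : (1:ℝ) ≤ d + j := le_add_of_le_of_nonneg hd (Nat.cast_nonneg j)
    exact Real.log_nonneg (le_of_lt (factor_gt_one hq0 hq1 hα0 hα1 hx))
  · intro j
    have hx : (1:ℝ) ≤ d + j := le_add_of_le_of_nonneg hd (Nat.cast_nonneg j)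
    have h1 : 0 < 1 - q ^ (d + (j:ℝ) - α) := den_pos hq0 hq1 hα1 hx
    have h2 : 0 < 1 - q ^ ((1:ℝ) - α) := den_pos hq0 hq1 hα1 le_rfl
    have h3 : 1 - q ^ ((1:ℝ) - α) ≤ 1 - q ^ (d + (j:ℝ) - α) := by
      have := Real.rpow_le_rpow_of_exponent_ge hq0 hq1.le
        (by linarith : (1:ℝ) - α ≤ d + (j:ℝ) - α)
      linarith
    have hlog : Real.log ((1 - q ^ (d + (j:ℝ))) / (1 - q ^ (d + (j:ℝ) - α)))
        ≤ (1 - q ^ (d + (j:ℝ))) / (1 - q ^ (d + (j:ℝ) - α)) - 1 :=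
      Real.log_le_sub_one_of_pos (factor_pos hq0 hq1 hα0 hα1 hx)
    have heq : (1 - q ^ (d + (j:ℝ))) / (1 - q ^ (d + (j:ℝ) - α)) - 1
        = (q ^ (d + (j:ℝ) - α) - q ^ (d + (j:ℝ))) / (1 - q ^ (d + (j:ℝ) - α)) := by
      rw [div_sub_one h1.ne']; ring_nf
    have hb : (q ^ (d + (j:ℝ) - α) - q ^ (d + (j:ℝ))) / (1 - q ^ (d + (j:ℝ) - α))
        ≤ q ^ (d + (j:ℝ) - α) / (1 - q ^ ((1:ℝ) - α)) := by
      apply div_le_div₀ (Real.rpow_pos_of_pos hq0 _).le _ h2 h3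
      have : (0:ℝ) < q ^ (d + (j:ℝ)) := Real.rpow_pos_of_pos hq0 _
      linarith
    have hsplit : q ^ (d + (j:ℝ) - α) = q ^ (d - α) * q ^ j := by
      rw [← Real.rpow_natCast q j, ← Real.rpow_add hq0]; ring_nf
    calc Real.log ((1 - q ^ (d + (j:ℝ))) / (1 - q ^ (d + (j:ℝ) - α)))
        ≤ (q ^ (d + (j:ℝ) - α) - q ^ (d + (j:ℝ))) / (1 - q ^ (d + (j:ℝ) - α)) := by
          rw [← heq]; exact hlog
      _ ≤ q ^ (d + (j:ℝ) - α) / (1 - q ^ ((1:ℝ) - α)) := hb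
      _ = q ^ (d - α) / (1 - q ^ ((1:ℝ) - α)) * q ^ j := by
          rw [hsplit]; ring

lemma hasProd_Pfun {q α : ℝ} (hq0 : 0 < q) (hq1 : q < 1) (hα0 : 0 < α) (hα1 : α < 1)
    {d : ℝ} (hd : 1 ≤ d) :
    HasProd (fun j : ℕ => (1 - q ^ (d + (j : ℝ))) / (1 - q ^ (d + (j : ℝ) - α)))
      (Real.exp (∑' j : ℕ,
        Real.log ((1 - q ^ (d + (j : ℝ))) / (1 - q ^ (d + (j : ℝ) - α))))) := by
  have hs := (summable_logf hq0 hq1 hα0 hα1 hd).hasSum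
  have h := hs.rexp
  have hfe : (fun j : ℕ => (1 - q ^ (d + (j : ℝ))) / (1 - q ^ (d + (j : ℝ) - α)))
      = rexp ∘ (fun j : ℕ =>
        Real.log ((1 - q ^ (d + (j : ℝ))) / (1 - q ^ (d + (j : ℝ) - α)))) := by
    funext j
    have hx : (1:ℝ) ≤ d + j := le_add_of_le_of_nonneg hd (Nat.cast_nonneg j)
    exact (Real.exp_log (factor_pos hq0 hq1 hα0 hα1 hx)).symm
  rw [hfe]; exact h

lemma Pfun_eq {q α : ℝ} (hq0 : 0 < q) (hq1 : q < 1) (hα0 : 0 < α) (hα1 : α < 1)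
    {d : ℝ} (hd : 1 ≤ d) :
    Pfun q α d = Real.exp (∑' j : ℕ,
      Real.log ((1 - q ^ (d + (j : ℝ))) / (1 - q ^ (d + (j : ℝ) - α)))) :=
  (hasProd_Pfun hq0 hq1 hα0 hα1 hd).tprod_eq

lemma Pfun_pos {q α : ℝ} (hq0 : 0 < q) (hq1 : q < 1) (hα0 : 0 < α) (hα1 : α < 1)
    {d : ℝ} (hd : 1 ≤ d) : 0 < Pfun q α d := by
  rw [Pfun_eq hq0 hq1 hα0 hα1 hd]; exact Real.exp_pos _

lemma Pfun_rec {q α : ℝ} (hq0 : 0 < q) (hq1 : q < 1) (hα0 : 0 < α) (hα1 : α < 1)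
    {d : ℝ} (hd : 1 ≤ d) :
    Pfun q α d = (1 - q ^ d) / (1 - q ^ (d - α)) * Pfun q α (d + 1) := by
  rw [Pfun_eq hq0 hq1 hα0 hα1 hd,
    Pfun_eq hq0 hq1 hα0 hα1 (by linarith : (1:ℝ) ≤ d + 1)]
  rw [Summable.tsum_eq_zero_add (summable_logf hq0 hq1 hα0 hα1 hd)]
  rw [Real.exp_add]
  have h0 : d + ((0:ℕ):ℝ) = d := by norm_num
  rw [h0, Real.exp_log (factor_pos hq0 hq1 hα0 hα1 hd)]
  congr 2
  apply tsum_congr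
  intro j
  congr 2 <;> push_cast <;> ring

lemma Pfun_step_lt {q α : ℝ} (hq0 : 0 < q) (hq1 : q < 1) (hα0 : 0 < α) (hα1 : α < 1)
    {d : ℝ} (hd : 1 ≤ d) :
    Pfun q α (d + 1) < q ^ (-α) * Pfun q α d := by
  have hP1 : 0 < Pfun q α (d + 1) := Pfun_pos hq0 hq1 hα0 hα1 (by linarith)
  have hden : 0 < 1 - q ^ (d - α) := den_pos hq0 hq1 hα1 hd
  have hqα : 1 < q ^ (-α) :=
    Real.one_lt_rpow_of_pos_of_lt_one_of_neg hq0 hq1 (by linarith)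
  have hkey : 1 < q ^ (-α) * ((1 - q ^ d) / (1 - q ^ (d - α))) := by
    rw [mul_div_assoc', lt_div_iff₀ hden, one_mul]
    have hmul : q ^ (-α) * (1 - q ^ d) = q ^ (-α) - q ^ (d - α) := by
      rw [mul_sub, mul_one, ← Real.rpow_add hq0]; ring_nf
    rw [hmul]; linarith
  calc Pfun q α (d + 1) = 1 * Pfun q α (d + 1) := (one_mul _).symm
    _ < (q ^ (-α) * ((1 - q ^ d) / (1 - q ^ (d - α)))) * Pfun q α (d + 1) :=
        mul_lt_mul_of_pos_right hkey hP1
    _ = q ^ (-α) * ((1 - q ^ d) / (1 - q ^ (d - α)) * Pfun q α (d + 1)) := by ring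
    _ = q ^ (-α) * Pfun q α d := by rw [← Pfun_rec hq0 hq1 hα0 hα1 hd]

/-- The q-factorial power `(q^m - q^k)_q^{-α}` for integers `m < k`, defined by the
convergent infinite product
`q^{-mα} · ∏_{j=0}^∞ (1 - q^{k-m+j}) / (1 - q^{k-m+j-α})`. -/
noncomputable def qFac (q α : ℝ) (m k : ℤ) : ℝ :=
  q ^ (-(m : ℝ) * α) *
    ∏' j : ℕ, (1 - q ^ (((k - m : ℤ) : ℝ) + (j : ℝ))) /
      (1 - q ^ (((k - m : ℤ) : ℝ) + (j : ℝ) - α))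

/-- `S q α n0 y n = Σ_{i=n}^{n0} q^i (q^n - q^{i+1})_q^{-α} y(i)`; for `n = n0 + 1`
the range is empty, so `S q α n0 y (n0+1) = 0`.  The Riemann q-fractional derivative
of order `α` based at `qa = q^{n0+1}`, evaluated at `t = q^n`, is
`(S q α n0 y n - S q α n0 y (n+1)) / ((1-q) q^n Γ_q(1-α))`,
whose sign is that of `S q α n0 y n - S q α n0 y (n+1)`. -/
noncomputable def S (q α : ℝ) (n0 : ℤ) (y : ℤ → ℝ) (n : ℤ) : ℝ :=
  ∑ i ∈ Finset.Icc n n0, q ^ (i : ℝ) * qFac q α n (i + 1) * y i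

lemma qFac_eq (q α : ℝ) (m k : ℤ) :
    qFac q α m k = q ^ (-(m : ℝ) * α) * Pfun q α ((k - m : ℤ) : ℝ) := rfl

/-- Strict version: if `y(a) > 0` (with `a = q^{n0}`) and `y` is strictly
increasing on `T_q` (i.e. `y(q^{n-1}) > y(q^n)`), then the Riemann q-fractional
derivative of order `α ∈ (0,1)` based at `qa` is strictly positive at every
`t = q^n`, `n < n0`. -/
theorem qFrac_pos_of_strict_increasing (q α : ℝ) (hq0 : 0 < q) (hq1 : q < 1)
    (hα0 : 0 < α) (hα1 : α < 1) (n0 : ℤ) (y : ℤ → ℝ)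
    (hy : 0 < y n0)
    (hinc : ∀ n : ℤ, n ≤ n0 → y n < y (n - 1)) :
    ∀ n : ℤ, n < n0 → 0 < S q α n0 y n - S q α n0 y (n + 1) := by
  have hmono : ∀ a b : ℤ, a < b → b ≤ n0 → y b < y a := by
    have key : ∀ k : ℕ, ∀ a : ℤ, a + 1 + (k : ℤ) ≤ n0 → y (a + 1 + (k : ℤ)) < y a := by
      intro k
      induction k with
      | zero => intro a h; simpa using hinc (a + 1) (by omega)
      | succ k ih =>
        intro a h
        have h2 : y (a + 1 + (k : ℤ) + 1) < y (a + 1 + (k : ℤ)) := by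
          have := hinc (a + 1 + (k : ℤ) + 1) (by push_cast at h ⊢; omega)
          simpa using this
        have h3 : y (a + 1 + (k : ℤ)) < y a := ih a (by push_cast at h ⊢; omega)
        have h4 : a + 1 + ((k + 1 : ℕ) : ℤ) = a + 1 + (k : ℤ) + 1 := by push_cast; ring
        rw [h4]
        exact h2.trans h3
    intro a b hab hb
    obtain ⟨k, hk⟩ : ∃ k : ℕ, b = a + 1 + (k : ℤ) := ⟨(b - a - 1).toNat, by omega⟩
    subst hk
    exact key k a hb
  intro n hn
  set A := q ^ (-(n : ℝ) * α) with hA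
  have hApos : 0 < A := Real.rpow_pos_of_pos hq0 _
  set u : ℤ → ℝ := fun i => q ^ (i : ℝ) * Pfun q α ((i + 1 - n : ℤ) : ℝ) with hu
  set v : ℤ → ℝ := fun i => q ^ (i : ℝ) * Pfun q α ((i - n : ℤ) : ℝ) with hv
  have hSn : S q α n0 y n = A * ∑ i ∈ Finset.Icc n n0, u i * y i := by
    unfold S
    rw [Finset.mul_sum]
    apply Finset.sum_congr rfl
    intro i _
    rw [qFac_eq]
    simp only [hu, hA]
    ring
  have hSn1 : S q α n0 y (n + 1)
      = (A * q ^ (-α)) * ∑ i ∈ Finset.Icc (n + 1) n0, v i * y i := by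
    unfold S
    rw [Finset.mul_sum]
    apply Finset.sum_congr rfl
    intro i _
    rw [qFac_eq]
    have h1 : ((i + 1 - (n + 1) : ℤ) : ℝ) = ((i - n : ℤ) : ℝ) := by push_cast; ring
    rw [h1]
    have h2 : q ^ (-((n + 1 : ℤ) : ℝ) * α) = A * q ^ (-α) := by
      rw [hA, ← Real.rpow_add hq0]; congr 1; push_cast; ring
    rw [h2]
    simp only [hv]
    ring
  have hIcc_split : Finset.Icc n n0 = insert n (Finset.Icc (n + 1) n0) := by
    ext x; simp only [Finset.mem_Icc, Finset.mem_insert]; omega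
  have hnotmem : n ∉ Finset.Icc (n + 1) n0 := by
    simp only [Finset.mem_Icc]; omega
  have hcneg : ∀ i ∈ Finset.Icc (n + 1) n0, u i - q ^ (-α) * v i < 0 := by
    intro i hi
    rw [Finset.mem_Icc] at hi
    have hd1 : (1 : ℝ) ≤ ((i - n : ℤ) : ℝ) := by
      exact_mod_cast (by omega : (1 : ℤ) ≤ i - n)
    have hstep := Pfun_step_lt hq0 hq1 hα0 hα1 hd1
    have harg : ((i + 1 - n : ℤ) : ℝ) = ((i - n : ℤ) : ℝ) + 1 := by push_cast; ring
    simp only [hu, hv, harg]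
    have hqi : (0 : ℝ) < q ^ (i : ℝ) := Real.rpow_pos_of_pos hq0 _
    nlinarith [mul_pos hqi (sub_pos.mpr hstep)]
  have hu_pos : ∀ i : ℤ, n ≤ i → 0 < u i := by
    intro i hi
    have hd1 : (1 : ℝ) ≤ ((i + 1 - n : ℤ) : ℝ) := by
      exact_mod_cast (by omega : (1 : ℤ) ≤ i + 1 - n)
    exact mul_pos (Real.rpow_pos_of_pos hq0 _) (Pfun_pos hq0 hq1 hα0 hα1 hd1)
  have hyn : 0 < y n := lt_trans hy (hmono n n0 hn le_rfl)
  -- reindex : sum of v over Icc (n+1) n0 equals sum of q * u over Icc n (n0-1)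
  have hre : ∑ i ∈ Finset.Icc (n + 1) n0, v i
      = ∑ i ∈ Finset.Icc n (n0 - 1), (q * u i) := by
    have hmap : Finset.Icc (n + 1) n0
        = (Finset.Icc n (n0 - 1)).map (addRightEmbedding 1) := by
      rw [Finset.map_add_right_Icc]; congr 1; omega
    rw [hmap, Finset.sum_map]
    apply Finset.sum_congr rfl
    intro i _
    show v (i + 1) = q * u i
    simp only [hu, hv]
    have h1 : ((i + 1 : ℤ) : ℝ) = (i : ℝ) + 1 := by push_cast; ring
    have h2 : ((i + 1 - n : ℤ) : ℝ) = ((i + 1 - n : ℤ) : ℝ) := rfl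
    rw [h1, Real.rpow_add hq0, Real.rpow_one]
    ring
  have htop : ∑ i ∈ Finset.Icc n n0, u i
      = (∑ i ∈ Finset.Icc n (n0 - 1), u i) + u n0 := by
    have hins : Finset.Icc n n0 = insert n0 (Finset.Icc n (n0 - 1)) := by
      ext x; simp only [Finset.mem_Icc, Finset.mem_insert]; omega
    rw [hins, Finset.sum_insert (by simp only [Finset.mem_Icc]; omega)]
    ring
  have hq1α : q ^ (-α) * q < 1 := by
    have he : q ^ (-α) * q = q ^ ((1 : ℝ) - α) := by
      rw [show (1 : ℝ) - α = -α + 1 by ring, Real.rpow_add hq0, Real.rpow_one]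
    rw [he]
    exact Real.rpow_lt_one hq0.le hq1 (by linarith)
  have hsum_nonneg : 0 ≤ ∑ i ∈ Finset.Icc n (n0 - 1), u i :=
    Finset.sum_nonneg fun i hi =>
      (hu_pos i (by exact (Finset.mem_Icc.mp hi).1)).le
  have hB_pos : 0 < u n + ∑ i ∈ Finset.Icc (n + 1) n0, (u i - q ^ (-α) * v i) := by
    have hB : u n + ∑ i ∈ Finset.Icc (n + 1) n0, (u i - q ^ (-α) * v i)
        = (∑ i ∈ Finset.Icc n n0, u i)
          - q ^ (-α) * ∑ i ∈ Finset.Icc (n + 1) n0, v i := by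
      rw [Finset.sum_sub_distrib, hIcc_split, Finset.sum_insert hnotmem,
        Finset.mul_sum]
      ring
    rw [hB, hre, htop, ← Finset.mul_sum]
    have hqα_pos : (0 : ℝ) < q ^ (-α) := Real.rpow_pos_of_pos hq0 _
    have hun0 : 0 < u n0 := hu_pos n0 (by omega)
    nlinarith [mul_nonneg (sub_nonneg.mpr hq1α.le) hsum_nonneg]
  have key : 0 < (∑ i ∈ Finset.Icc n n0, u i * y i)
      - q ^ (-α) * ∑ i ∈ Finset.Icc (n + 1) n0, v i * y i := by
    have h1 : (∑ i ∈ Finset.Icc n n0, u i * y i)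
        - q ^ (-α) * ∑ i ∈ Finset.Icc (n + 1) n0, v i * y i
        = u n * y n
          + ∑ i ∈ Finset.Icc (n + 1) n0, (u i * y i - q ^ (-α) * (v i * y i)) := by
      rw [Finset.sum_sub_distrib, hIcc_split, Finset.sum_insert hnotmem,
        Finset.mul_sum]
      ring
    rw [h1]
    have h2 : ∑ i ∈ Finset.Icc (n + 1) n0, ((u i - q ^ (-α) * v i) * y n)
        < ∑ i ∈ Finset.Icc (n + 1) n0, (u i * y i - q ^ (-α) * (v i * y i)) := by
      apply Finset.sum_lt_sum_of_nonempty
      · exact ⟨n + 1, by rw [Finset.mem_Icc]; omega⟩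
      · intro i hi
        have hc := hcneg i hi
        rw [Finset.mem_Icc] at hi
        have hyi : y i < y n := hmono n i (by omega) hi.2
        nlinarith [mul_pos (neg_pos.mpr hc) (sub_pos.mpr hyi)]
    have h3 : u n * y n + ∑ i ∈ Finset.Icc (n + 1) n0, ((u i - q ^ (-α) * v i) * y n)
        = y n * (u n + ∑ i ∈ Finset.Icc (n + 1) n0, (u i - q ^ (-α) * v i)) := by
      rw [← Finset.sum_mul]; ring
    have h4 : 0 < y n * (u n + ∑ i ∈ Finset.Icc (n + 1) n0, (u i - q ^ (-α) * v i)) :=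
      mul_pos hyn hB_pos
    linarith
  rw [hSn, hSn1]
  have hfin : A * (∑ i ∈ Finset.Icc n n0, u i * y i)
      - A * q ^ (-α) * ∑ i ∈ Finset.Icc (n + 1) n0, v i * y i
      = A * ((∑ i ∈ Finset.Icc n n0, u i * y i)
        - q ^ (-α) * ∑ i ∈ Finset.Icc (n + 1) n0, v i * y i) := by ring
  rw [hfin]
  exact mul_pos hApos key
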